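/- Let ψ ≥ 0 be a real number. Then the inequality (1 − (1+ψ)·p·w + ψ·p²·w²)² ≤ (1 − p·w)² holds for all p ∈ [0,1] and all w ∈ [0,1] if and only if ψ ∈ [0,2]. -/

import Mathlib

/-- The algebraic core of Theorem 1: for `ψ ≥ 0`, the limiting squared-bias inequality
`(1 - (1+ψ)pw + ψp²w²)² ≤ (1 - pw)²` holds for all `p, w ∈ [0,1]` iff `ψ ∈ [0,2]`. -/
theorem neutral_pivot_iff (ψ : ℝ) (hψ : 0 ≤ ψ) :
    (∀ p ∈ Set.Icc (0:ℝ) 1, ∀ w ∈ Set.Icc (0:ℝ) 1,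
      (1 - (1 + ψ) * p * w + ψ * p ^ 2 * w ^ 2) ^ 2 ≤ (1 - p * w) ^ 2)
      ↔ ψ ∈ Set.Icc (0:ℝ) 2 := by
  constructor
  · intro h
    refine ⟨hψ, ?_⟩
    by_contra hgt
    push_neg at hgt
    have hψpos : 0 < ψ := by linarith
    set t : ℝ := (2 + ψ) / (2 * ψ) with ht
    have ht0 : 0 < t := by positivity
    have ht1 : t < 1 := by
      rw [div_lt_one (by positivity)]; linarith
    have hψt : ψ * t = (2 + ψ) / 2 := by
      rw [ht]; field_simp
    have := h t ⟨le_of_lt ht0, le_of_lt ht1⟩ 1 ⟨zero_le_one, le_refl 1⟩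
    have h1 : (1 - (1 + ψ) * t + ψ * t ^ 2) ^ 2 ≤ (1 - t) ^ 2 := by
      simpa using this
    have hfac : (1 - (1 + ψ) * t + ψ * t ^ 2) = (1 - t) * (1 - ψ * t) := by ring
    have h2 : (1 - ψ * t) = -(ψ / 2) := by rw [hψt]; ring
    rw [hfac, h2] at h1
    have hpos : 0 < (1 - t) ^ 2 := pow_pos (by linarith) 2
    nlinarith [mul_pos hpos (show (0:ℝ) < ψ ^ 2 / 4 - 1 by nlinarith)]
  · rintro ⟨-, hψ2⟩ p ⟨hp0, hp1⟩ w ⟨hw0, hw1⟩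
    have hx0 : 0 ≤ p * w := mul_nonneg hp0 hw0
    have hx1 : p * w ≤ 1 := mul_le_one₀ hp1 hw0 hw1
    have hψx : ψ * (p * w) ≤ 2 := by
      calc ψ * (p * w) ≤ ψ * 1 := by exact mul_le_mul_of_nonneg_left hx1 hψ
        _ ≤ 2 := by linarith
    nlinarith [sq_nonneg (1 - p * w), sq_nonneg ((1 - p * w) * (1 - ψ * (p * w))),
      mul_nonneg (mul_nonneg hψ hx0) (sq_nonneg (1 - p * w)),
      mul_nonneg (sub_nonneg.mpr hψx) (mul_nonneg (mul_nonneg hψ hx0) (sq_nonneg (1 - p * w)))]
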